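/- Every cluster of 𝒢* is contained in some cluster of 𝒢 (i.e., 𝒢* refines 𝒢, allowing 𝒢* = 𝒢) if and only if 𝒯_𝒢 ⊆ 𝒯_{𝒢*}. -/

import Mathlib

open Matrix

/-- The set `𝒯_𝒢` of symmetric `d×d` matrices that are constant on the blocks of pairs
induced by the cluster map `g`: `R i j = R i' j'` whenever `i < j`, `i' < j'` and the
unordered pairs of cluster labels `{g i, g j}` and `{g i', g j'}` coincide. -/
def TG {d K : ℕ} (g : Fin d → Fin K) : Set (Matrix (Fin d) (Fin d) ℝ) :=
  {R | R.IsSymm ∧ ∀ i j i' j' : Fin d, i < j → i' < j' →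
    ((g i = g i' ∧ g j = g j') ∨ (g i = g j' ∧ g j = g i')) → R i j = R i' j'}

/-- `𝒢*` refines `𝒢` (every cluster of `𝒢*` is contained in some cluster
of `𝒢`) if and only if `𝒯_𝒢 ⊆ 𝒯_{𝒢*}`.  Here the partition `𝒢` is given by the
surjective cluster map `g : Fin d → Fin K` and `𝒢*` by `g' : Fin d → Fin K'`. -/
theorem statement_3 {d K K' : ℕ} (hd : 3 ≤ d) (hK : 1 ≤ K) (hK' : 1 ≤ K')
    (g : Fin d → Fin K) (hg : Function.Surjective g)
    (g' : Fin d → Fin K') (hg' : Function.Surjective g') :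
    (∀ i j : Fin d, g' i = g' j → g i = g j) ↔ TG g ⊆ TG g' := by
  constructor
  · intro h R hR
    refine ⟨hR.1, fun i j i' j' hij hij' hcond => ?_⟩
    refine hR.2 i j i' j' hij hij' ?_
    rcases hcond with ⟨h1, h2⟩ | ⟨h1, h2⟩
    · exact Or.inl ⟨h i i' h1, h j j' h2⟩
    · exact Or.inr ⟨h i j' h1, h j i' h2⟩
  · intro hsub i j hgij
    by_contra hne
    have hij : i ≠ j := fun h => hne (h ▸ rfl)
    obtain ⟨k, hki, hkj⟩ : ∃ k : Fin d, k ≠ i ∧ k ≠ j := by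
      by_contra hc
      push_neg at hc
      have hsubs : (Finset.univ : Finset (Fin d)) ⊆ {i, j} := by
        intro x _
        rcases eq_or_ne x i with h | h
        · simp [h]
        · simp [hc x h]
      have := Finset.card_le_card hsubs
      simp only [Finset.card_univ, Fintype.card_fin] at this
      have h2 : ({i, j} : Finset (Fin d)).card ≤ 2 :=
        (Finset.card_insert_le _ _).trans (by simp)
      omega
    set R : Matrix (Fin d) (Fin d) ℝ :=
      fun a b => ((g a : ℕ) : ℝ) + ((g b : ℕ) : ℝ) with hRdef
    have hRsymm : ∀ a b, R a b = R b a := by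
      intro a b; simp [hRdef, add_comm]
    have hRg : R ∈ TG g := by
      refine ⟨?_, ?_⟩
      · ext a b
        exact hRsymm b a
      · intro a b a' b' _ _ hcond
        rcases hcond with ⟨h1, h2⟩ | ⟨h1, h2⟩
        · simp [hRdef, h1, h2]
        · simp [hRdef, h1, h2, add_comm]
    have hR' := hsub hRg
    have key : R i k = R j k := by
      rcases lt_or_gt_of_ne (Ne.symm hki) with h1 | h1
      · rcases lt_or_gt_of_ne (Ne.symm hkj) with h2 | h2
        · exact hR'.2 i k j k h1 h2 (Or.inl ⟨hgij, rfl⟩)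
        · have := hR'.2 i k k j h1 h2 (Or.inr ⟨hgij, rfl⟩)
          rw [this, hRsymm]
      · rcases lt_or_gt_of_ne (Ne.symm hkj) with h2 | h2
        · have := hR'.2 k i j k h1 h2 (Or.inr ⟨rfl, hgij⟩)
          rw [← this, hRsymm]
        · have := hR'.2 k i k j h1 h2 (Or.inl ⟨rfl, hgij⟩)
          rw [hRsymm i k, this, hRsymm]
    have hval : ((g i : ℕ) : ℝ) = ((g j : ℕ) : ℝ) := by
      have : ((g i : ℕ) : ℝ) + ((g k : ℕ) : ℝ)
          = ((g j : ℕ) : ℝ) + ((g k : ℕ) : ℝ) := key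
      linarith
    exact hne (Fin.val_injective (Nat.cast_injective hval))
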